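/- Let c, θ ∈ ℝ and define the real 3×3 matrices ξ₁ = 2c²[[0,0,0],[0,0,−1],[0,1,0]], ξ₂ = 2c²[[0, sin θ, cos θ],[−sin θ, 0, 0],[−cos θ, 0, 0]], ξ₃ = 2c²[[0, −cos θ, sin θ],[cos θ, 0, 0],[−sin θ, 0, 0]]. Then for every real symmetric 3×3 matrix m with tr m = 0: −Σ_{a=1}^{3} tr(ξ_a m ξ_a m) = −8c⁴( m₁₂² + m₂₃² + m₁₃² − m₁₁m₂₂ − m₂₂m₃₃ − m₃₃m₁₁ ) = −4c⁴ ‖m‖²_F. (The key algebraic identity, equation (4.16) of the paper, in the proof that inverse stereographic projection is restricted E₄-stable: ⟨φ*ω·L_Xg, L_Xg·φ*ω⟩ = −4 f′(r)⁴ |L_Xg|², where the ξ_a are the components of the pulled-back commutator 2-form φ*ω of the stereographic hedgehog with c = f′(r) and θ = f(r).) -/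

import Mathlib

open Matrix

noncomputable section

set_option maxHeartbeats 1600000 in
theorem stmt16 (c θ : ℝ)
    (ξ : Fin 3 → Matrix (Fin 3) (Fin 3) ℝ)
    (hξ0 : ξ 0 = (2 * c ^ 2) • !![0, 0, 0; 0, 0, -1; 0, 1, 0])
    (hξ1 : ξ 1 = (2 * c ^ 2) •
      !![0, Real.sin θ, Real.cos θ; -Real.sin θ, 0, 0; -Real.cos θ, 0, 0])
    (hξ2 : ξ 2 = (2 * c ^ 2) •
      !![0, -Real.cos θ, Real.sin θ; Real.cos θ, 0, 0; -Real.sin θ, 0, 0])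
    (m : Matrix (Fin 3) (Fin 3) ℝ) (hsym : mᵀ = m) (htr : m.trace = 0) :
    (-(∑ a, (ξ a * m * ξ a * m).trace)
      = -8 * c ^ 4 * ((m 0 1) ^ 2 + (m 1 2) ^ 2 + (m 0 2) ^ 2
          - m 0 0 * m 1 1 - m 1 1 * m 2 2 - m 2 2 * m 0 0))
    ∧ -(∑ a, (ξ a * m * ξ a * m).trace) = -4 * c ^ 4 * (∑ i, ∑ j, (m i j) ^ 2) := by
  have h10 : m 1 0 = m 0 1 := by
    simpa using (congrFun (congrFun hsym 1) 0).symm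
  have h20 : m 2 0 = m 0 2 := by
    simpa using (congrFun (congrFun hsym 2) 0).symm
  have h21 : m 2 1 = m 1 2 := by
    simpa using (congrFun (congrFun hsym 2) 1).symm
  have htr' : m 0 0 + m 1 1 + m 2 2 = 0 := by
    simpa [Matrix.trace, Fin.sum_univ_three] using htr
  have hpy := Real.sin_sq_add_cos_sq θ
  norm_num [Fin.sum_univ_three, hξ0, hξ1, hξ2, Matrix.trace, Matrix.diag,
    Matrix.mul_apply, Matrix.smul_apply, smul_eq_mul, h10, h20, h21,
    Matrix.vecHead, Matrix.vecTail, Function.comp, Matrix.cons_val_two, Matrix.cons_val_one, Matrix.cons_val_zero,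
    Matrix.cons_val_succ]
  constructor
  · linear_combination (-8 * c ^ 4 * ((m 0 1) ^ 2 + (m 0 2) ^ 2
      - m 0 0 * m 1 1 - m 0 0 * m 2 2)) * hpy
  · linear_combination (-8 * c ^ 4 * ((m 0 1) ^ 2 + (m 0 2) ^ 2
      - m 0 0 * m 1 1 - m 0 0 * m 2 2)) * hpy
      + 4 * c ^ 4 * (m 0 0 + m 1 1 + m 2 2) * htr'
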